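/- For all k ≥ 1, t(2^(2k) − 2) = 2^k − 1; for all k ≥ 0, t(2^(2k+1) − 2) = 1 and t(3·2^k − 1) = 2^⌊(k+1)/2⌋. -/
import Mathlib


def rs : ℕ → ℤ
  | 0 => 1
  | (n+1) =>
    if (n+1) % 2 = 0 then rs ((n+1)/2)
    else (-1)^((n+1)/2) * rs ((n+1)/2)
decreasing_by all_goals exact Nat.div_lt_self (Nat.succ_pos n) (by norm_num)

def s (n : ℕ) : ℤ := ∑ i ∈ Finset.range (n+1), rs i

def t (n : ℕ) : ℤ := ∑ i ∈ Finset.range (n+1), (-1)^i * rs i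

lemma rs_even (n : ℕ) : rs (2*n) = rs n := by
  cases n with
  | zero => rfl
  | succ m =>
    show rs (2*m+1+1) = rs (m+1)
    rw [rs]
    have h1 : (2*m+1+1) % 2 = 0 := by omega
    have h2 : (2*m+1+1) / 2 = m+1 := by omega
    rw [h1, h2]
    simp

lemma rs_odd (n : ℕ) : rs (2*n+1) = (-1)^n * rs n := by
  rw [rs]
  have h1 : ¬ ((2*n+1) % 2 = 0) := by omega
  have h2 : (2*n+1) / 2 = n := by omega
  rw [if_neg h1, h2]

lemma sum_pair (f : ℕ → ℤ) (m : ℕ) :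
    ∑ i ∈ Finset.range (2*m), f i = ∑ j ∈ Finset.range m, (f (2*j) + f (2*j+1)) := by
  induction m with
  | zero => simp
  | succ k ih =>
    rw [Finset.sum_range_succ, ← ih, Nat.mul_succ, Finset.sum_range_succ, Finset.sum_range_succ]
    ring_nf

lemma s_rec (n : ℕ) : s (2*n+1) = s n + t n := by
  have : (2*n+1)+1 = 2*(n+1) := by ring
  rw [s, this, sum_pair]
  simp only [rs_even, rs_odd]
  rw [Finset.sum_add_distrib]
  rfl

lemma t_rec (n : ℕ) : t (2*n+1) = s n - t n := by
  have : (2*n+1)+1 = 2*(n+1) := by ring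
  rw [t, this, sum_pair]
  have h : ∀ j, ((-1:ℤ))^(2*j) * rs (2*j) + (-1)^(2*j+1) * rs (2*j+1) = rs j - (-1)^j * rs j := by
    intro j
    rw [rs_even, rs_odd, pow_succ, pow_mul]
    ring_nf
  simp only [h]
  rw [Finset.sum_sub_distrib]
  rfl

lemma s_rec2 (n : ℕ) : s (2*n+2) = s n + t n + rs (n+1) := by
  have h : 2*n+2 = (2*n+1)+1 := rfl
  rw [s, h, Finset.sum_range_succ, ← s, s_rec, show 2*n+1+1 = 2*(n+1) from by ring, rs_even]

lemma t_rec2 (n : ℕ) : t (2*n+2) = s n - t n + rs (n+1) := by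
  have h : 2*n+2 = (2*n+1)+1 := rfl
  rw [t, h, Finset.sum_range_succ, ← t, t_rec, show 2*n+1+1 = 2*(n+1) from by ring, rs_even]
  simp [pow_mul]

lemma rs_pow_sub_one (m : ℕ) : rs (2^(m+1) - 1) = (-1)^m := by
  induction m with
  | zero => simp [rs]
  | succ j ih =>
    have h : 2^(j+2) - 1 = 2*(2^(j+1) - 1) + 1 := by
      have : 2 ≤ 2^(j+1) := Nat.one_lt_two_pow (by omega)
      rw [pow_succ]; omega
    rw [h, rs_odd, ih]
    have hodd : Odd (2^(j+1) - 1) := by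
      have : 2 ≤ 2^(j+1) := Nat.one_lt_two_pow (by omega)
      exact ⟨2^j - 1, by rw [pow_succ] at this ⊢; omega⟩
    rw [hodd.neg_one_pow, pow_succ]
    ring

lemma part3 (k : ℕ) : s (3*2^k - 1) = 2^((k+1)/2) + 2*2^(k/2) ∧ t (3*2^k - 1) = 2^((k+1)/2) := by
  induction k with
  | zero => constructor <;> simp [s, t, Finset.sum_range_succ, rs]
  | succ j ih =>
    obtain ⟨hs, ht⟩ := ih
    have h : 3*2^(j+1) - 1 = 2*(3*2^j - 1) + 1 := by
      have : 1 ≤ 2^j := Nat.one_le_two_pow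
      rw [pow_succ]; omega
    have he : (j+2)/2 = j/2 + 1 := by omega
    constructor
    · rw [h, s_rec, hs, ht, show j+1+1 = j+2 from rfl, he, pow_succ]
      ring
    · rw [h, t_rec, hs, ht, show j+1+1 = j+2 from rfl, he, pow_succ]
      ring

lemma part12 (k : ℕ) (hk : 1 ≤ k) :
    s (2^(2*k) - 2) = 2^k + 1 ∧ t (2^(2*k) - 2) = 2^k - 1 ∧
    s (2^(2*k+1) - 2) = 2^(k+1) - 1 ∧ t (2^(2*k+1) - 2) = 1 := by
  induction k, hk using Nat.le_induction with
  | base =>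
    refine ⟨?_, ?_, ?_, ?_⟩ <;> norm_num <;> simp [s, t, Finset.sum_range_succ, rs]
  | succ j hj ih =>
    obtain ⟨hs1, ht1, hs2, ht2⟩ := ih
    have p1 : 2 ≤ 2^(2*j+1) := Nat.one_lt_two_pow (by omega)
    have p2 : 2 ≤ 2^(2*j+2) := Nat.one_lt_two_pow (by omega)
    have h1 : 2^(2*(j+1)) - 2 = 2*(2^(2*j+1) - 2) + 2 := by
      rw [show 2*(j+1) = (2*j+1)+1 from by ring, pow_succ]; omega
    have h2 : 2^(2*(j+1)+1) - 2 = 2*(2^(2*(j+1)) - 2) + 2 := by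
      rw [show 2*(j+1)+1 = (2*(j+1))+1 from rfl, pow_succ]; omega
    have e1 : 2^(2*j+1) - 2 + 1 = 2^(2*j+1) - 1 := by omega
    have e2 : 2^(2*(j+1)) - 2 + 1 = 2^(2*(j+1)) - 1 := by
      have : 2 ≤ 2^(2*(j+1)) := Nat.one_lt_two_pow (by omega)
      omega
    have r1 : rs (2^(2*j+1) - 2 + 1) = 1 := by
      rw [e1, show 2*j+1 = (2*j)+1 from rfl, rs_pow_sub_one]
      simp [pow_mul]
    have r2 : rs (2^(2*(j+1)) - 2 + 1) = -1 := by
      rw [e2, show 2*(j+1) = (2*j+1)+1 from by ring, rs_pow_sub_one]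
      simp [pow_succ, pow_mul]
    have A1 : s (2^(2*(j+1)) - 2) = 2^(j+1) + 1 := by
      rw [h1, s_rec2, hs2, ht2, r1, pow_succ]; ring
    have A2 : t (2^(2*(j+1)) - 2) = 2^(j+1) - 1 := by
      rw [h1, t_rec2, hs2, ht2, r1, pow_succ]; ring
    refine ⟨A1, A2, ?_, ?_⟩
    · rw [h2, s_rec2, A1, A2, r2, pow_succ, pow_succ]; ring
    · rw [h2, t_rec2, A1, A2, r2]; ring

theorem stmt16 : (∀ k : ℕ, 1 ≤ k → t (2^(2*k) - 2) = 2^k - 1) ∧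
    (∀ k : ℕ, t (2^(2*k+1) - 2) = 1) ∧
    (∀ k : ℕ, t (3 * 2^k - 1) = 2^((k+1)/2)) := by
  refine ⟨fun k hk => (part12 k hk).2.1, fun k => ?_, fun k => (part3 k).2⟩
  cases k with
  | zero => simp [t, rs]
  | succ j => exact (part12 (j+1) (by omega)).2.2.2
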